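/- Let B_k = { Σ_{i=0}^{k-1} ε_i 4^i : ε_i ∈ {1,2} } and A = ⋃_{k≥1} ⋃_{i=0}^{8} (i·4^{k-1} + B_k). Then for all n ≥ 1, A(n) = |{a ∈ A : a ≤ n}| < 34·√n. -/

import Mathlib

/-- B_k: integers whose k-digit base-4 expansion uses only digits 1 and 2. -/
def Bset (k : ℕ) : Set ℕ :=
  {m | ∃ ε : ℕ → ℕ, (∀ i < k, ε i = 1 ∨ ε i = 2) ∧
        m = ∑ i ∈ Finset.range k, ε i * 4 ^ i}

/-- A = ⋃_{k ≥ 1} ⋃_{0 ≤ i ≤ 8} (i·4^{k-1} + B_k). -/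
def Aset : Set ℕ :=
  {m | ∃ k : ℕ, 1 ≤ k ∧ ∃ i : ℕ, i ≤ 8 ∧ ∃ b ∈ Bset k, m = i * 4 ^ (k - 1) + b}

/-- Counting function: number of elements of `A` that are at most `n`. -/
noncomputable def countUpTo (A : Set ℕ) (n : ℕ) : ℕ := (A ∩ Set.Iic n).ncard

/-- Finset version of `Bset`. -/
def BFin (m : ℕ) : Finset ℕ :=
  (Finset.univ : Finset (Fin m → Fin 2)).image
    (fun ε => ∑ i : Fin m, ((ε i : ℕ) + 1) * 4 ^ (i : ℕ))

lemma BFin_card (m : ℕ) : (BFin m).card ≤ 2 ^ m := by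
  calc (BFin m).card ≤ (Finset.univ : Finset (Fin m → Fin 2)).card :=
        Finset.card_image_le
    _ = 2 ^ m := by simp

lemma mem_BFin {m b : ℕ} (hb : b ∈ Bset m) : b ∈ BFin m := by
  obtain ⟨ε, hε, rfl⟩ := hb
  refine Finset.mem_image.2 ⟨fun i => ⟨ε i - 1, ?_⟩, Finset.mem_univ _, ?_⟩
  · rcases hε i i.2 with h | h <;> simp [h]
  · rw [Fin.sum_univ_eq_sum_range (fun j => (ε j - 1 + 1) * 4 ^ j) m]
    refine Finset.sum_congr rfl fun i hi => ?_
    rcases hε i (Finset.mem_range.1 hi) with h | h <;> simp [h]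

lemma Bset_zero {b : ℕ} (hb : b ∈ Bset 0) : b = 0 := by
  obtain ⟨ε, _, rfl⟩ := hb
  simp

lemma Bset_pos {k b : ℕ} (hk : 1 ≤ k) (hb : b ∈ Bset k) : 1 ≤ b := by
  obtain ⟨ε, hε, rfl⟩ := hb
  obtain ⟨m, rfl⟩ : ∃ m, k = m + 1 := ⟨k - 1, by omega⟩
  have h0 : 1 ≤ ε 0 := by rcases hε 0 (by omega) with h | h <;> omega
  calc 1 ≤ ε 0 * 4 ^ 0 := by simpa using h0
    _ ≤ ∑ i ∈ Finset.range (m + 1), ε i * 4 ^ i :=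
      Finset.single_le_sum (f := fun i => ε i * 4 ^ i) (fun i _ => Nat.zero_le _)
        (Finset.mem_range.2 (by omega))

lemma Bset_decomp {k b : ℕ} (hk : 1 ≤ k) (hb : b ∈ Bset k) :
    ∃ e, (e = 1 ∨ e = 2) ∧ ∃ b', b' ∈ Bset (k - 1) ∧ b = e * 4 ^ (k - 1) + b' := by
  obtain ⟨ε, hε, rfl⟩ := hb
  obtain ⟨m, rfl⟩ : ∃ m, k = m + 1 := ⟨k - 1, by omega⟩
  refine ⟨ε m, hε m (by omega), ∑ i ∈ Finset.range m, ε i * 4 ^ i,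
    ⟨ε, fun i hi => hε i (by omega), by simp⟩, ?_⟩
  rw [Finset.sum_range_succ]
  simp [Nat.add_comm]

/-- The covering finset. -/
def Fcov (L : ℕ) : Finset ℕ :=
  Finset.Icc 1 10 ∪ (Finset.Icc 1 L).biUnion (fun m =>
    (Finset.Icc 1 10).biUnion (fun j => (BFin m).image (fun b => j * 4 ^ m + b)))

lemma geom_bound (L : ℕ) : 10 + ∑ m ∈ Finset.Icc 1 L, 10 * 2 ^ m ≤ 10 * 2 ^ (L + 1) := by
  induction L with
  | zero => simp
  | succ L ih =>
    rw [show Finset.Icc 1 (L + 1) = insert (L + 1) (Finset.Icc 1 L) by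
      ext x; simp [Finset.mem_Icc]; omega,
      Finset.sum_insert (by simp)]
    have : (10 : ℕ) * 2 ^ (L + 1 + 1) = 10 * 2 ^ (L + 1) + 10 * 2 ^ (L + 1) := by ring
    omega

lemma Fcov_card (L : ℕ) : (Fcov L).card ≤ 10 * 2 ^ (L + 1) := by
  refine le_trans ?_ (geom_bound L)
  refine le_trans (Finset.card_union_le _ _) (Nat.add_le_add (by simp) ?_)
  refine le_trans (Finset.card_biUnion_le) (Finset.sum_le_sum fun m _ => ?_)
  refine le_trans (Finset.card_biUnion_le) ?_
  calc ∑ _j ∈ Finset.Icc 1 10, ((BFin m).image (fun b => _j * 4 ^ m + b)).card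
      ≤ ∑ _j ∈ Finset.Icc 1 10, 2 ^ m :=
        Finset.sum_le_sum fun j _ => le_trans Finset.card_image_le (BFin_card m)
    _ = 10 * 2 ^ m := by simp [Nat.card_Icc]

lemma cover (n : ℕ) (hn : 1 ≤ n) : Aset ∩ Set.Iic n ⊆ ↑(Fcov (Nat.log 4 n)) := by
  rintro a ⟨⟨k, hk, i, hi, b, hb, rfl⟩, han⟩
  obtain ⟨e, he, b', hb', hbeq⟩ := Bset_decomp hk hb
  have he1 : 1 ≤ e := by omega
  have he2 : e ≤ 2 := by omega
  simp only [Set.mem_Iic] at han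
  rcases Nat.eq_or_lt_of_le hk with h1 | h2
  · -- k = 1
    have hk1 : k - 1 = 0 := by omega
    have hb0 : b' = 0 := Bset_zero (hk1 ▸ hb')
    apply Finset.mem_coe.2
    apply Finset.mem_union_left
    rw [hbeq, hb0, hk1]
    simp only [pow_zero, mul_one, Nat.add_zero]
    exact Finset.mem_Icc.2 ⟨by omega, by omega⟩
  · -- k ≥ 2
    set m := k - 1 with hm
    have hm1 : 1 ≤ m := by omega
    have hb'1 : 1 ≤ b' := Bset_pos hm1 hb'
    have haeq : i * 4 ^ (k - 1) + b = (i + e) * 4 ^ m + b' := by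
      rw [hbeq, ← hm]; ring
    rw [haeq] at han
    have h4m : 4 ^ m ≤ n := by
      have h1 : 4 ^ m ≤ (i + e) * 4 ^ m := Nat.le_mul_of_pos_left _ (by omega)
      omega
    have hmL : m ≤ Nat.log 4 n :=
      (Nat.le_log_iff_pow_le (by norm_num) (by omega)).2 h4m
    apply Finset.mem_coe.2
    apply Finset.mem_union_right
    refine Finset.mem_biUnion.2 ⟨m, Finset.mem_Icc.2 ⟨hm1, hmL⟩, ?_⟩
    refine Finset.mem_biUnion.2 ⟨i + e, Finset.mem_Icc.2 ⟨by omega, by omega⟩, ?_⟩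
    exact Finset.mem_image.2 ⟨b', mem_BFin hb', haeq.symm⟩

theorem stmt_7 :
    ∀ n : ℕ, 1 ≤ n → (countUpTo Aset n : ℝ) < 34 * Real.sqrt n := by
  intro n hn
  set L := Nat.log 4 n with hL
  have hcount : countUpTo Aset n ≤ 10 * 2 ^ (L + 1) := by
    refine le_trans ?_ (Fcov_card L)
    rw [countUpTo, ← Set.ncard_coe_finset (Fcov L)]
    exact Set.ncard_le_ncard (cover n hn) (Fcov L).finite_toSet
  have hsqrt : (2 : ℝ) ^ L ≤ Real.sqrt n := by
    rw [show ((2:ℝ) ^ L) = Real.sqrt ((4:ℝ) ^ L) by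
      rw [show ((4:ℝ) ^ L) = ((2:ℝ) ^ L) ^ 2 by
        rw [← pow_mul, mul_comm L 2, pow_mul]; norm_num, Real.sqrt_sq (by positivity)]]
    apply Real.sqrt_le_sqrt
    have h4 : (4 : ℕ) ^ L ≤ n := Nat.pow_log_le_self 4 (by omega)
    exact_mod_cast h4
  have hpos : 0 < Real.sqrt n := Real.sqrt_pos.2 (by exact_mod_cast hn)
  calc (countUpTo Aset n : ℝ) ≤ 10 * 2 ^ (L + 1) := by exact_mod_cast hcount
    _ = 20 * 2 ^ L := by ring
    _ ≤ 20 * Real.sqrt n := by nlinarith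
    _ < 34 * Real.sqrt n := by nlinarith
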